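/- Let 𝔥 be a complex vector space with a symmetric bilinear form κ, let M be a complex vector space, and suppose operators x_{(n)} ∈ End_ℂ(M) (x ∈ 𝔥, n ∈ ℤ) satisfy the Heisenberg commutation relations. Then for all x, h ∈ 𝔥 and all integers m and r ≤ 0: if m ≤ 0 then x_{(m)} ∘ E_r(h) = E_r(h) ∘ x_{(m)}; and if m ≥ 1 then x_{(m)} ∘ E_r(h) − E_r(h) ∘ x_{(m)} = κ(x,h)·E_{r+m}(h), where E_s(h) := 0 for s ≥ 1. Equivalently, [x_{(m)}, E⁻(h,z)] = 0 for m ≤ 0 and [x_{(m)}, E⁻(h,z)] = κ(x,h)·z^m·E⁻(h,z) for m ≥ 1. -/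

import Mathlib

/-!
Statement 7: Heisenberg commutation of the operators `E_r(h)` (the coefficients
of `E⁻(h,z) = exp(Σ_{n<0} h_{(n)}/(−n) z^{−n})`) with the modes `x_{(m)}`:
for `r ≤ 0`, if `m ≤ 0` then `x_{(m)}` commutes with `E_r(h)`, and if `m ≥ 1`
then `[x_{(m)}, E_r(h)] = κ(x,h) · E_{r+m}(h)` (with `E_s(h) = 0` for `s ≥ 1`).
-/

open scoped BigOperators

variable {H M : Type*} [AddCommGroup H] [Module ℂ H] [AddCommGroup M] [Module ℂ M]

/-- The finset of `k`-tuples of negative integers summing to `r`. -/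
noncomputable def negTuples (k : ℕ) (r : ℤ) : Finset (Fin k → ℤ) :=
  (Fintype.piFinset fun _ => Finset.Icc r (-1)).filter fun f => ∑ j, f j = r

/-- The coefficient `E_r(h)` of `z^{−r}` in
`E⁻(h,z) = exp(Σ_{n<0} h_{(n)}/(−n) z^{−n})`, namely
`Σ_k (1/k!) Σ_{i₁+⋯+i_k = r, i_j < 0} Π_j (−i_j)⁻¹ · h_{(i₁)} ∘ ⋯ ∘ h_{(i_k)}`;
it is `id` for `r = 0` and `0` for `r ≥ 1`. -/
noncomputable def Ecoef (act : H → ℤ → Module.End ℂ M) (h : H) (r : ℤ) :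
    Module.End ℂ M :=
  if 1 ≤ r then 0
  else
    ∑ k ∈ Finset.range ((-r).toNat + 1),
      (k.factorial : ℂ)⁻¹ •
        ∑ f ∈ negTuples k r,
          (∏ j, (-(f j : ℂ))⁻¹) • (List.ofFn fun j => act h (f j)).prod

/-! ### Auxiliary lemmas -/

lemma mem_negTuples {k : ℕ} {s : ℤ} {f : Fin k → ℤ} :
    f ∈ negTuples k s ↔ (∀ j, s ≤ f j ∧ f j ≤ -1) ∧ ∑ j, f j = s := by
  simp [negTuples, Fintype.mem_piFinset, Finset.mem_Icc]

lemma negTuples_eq_empty {k : ℕ} {s : ℤ} (hs : -(k : ℤ) < s) : negTuples k s = ∅ := by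
  ext f
  simp only [Finset.notMem_empty, iff_false]
  intro hf
  rw [mem_negTuples] at hf
  obtain ⟨hb, hsum⟩ := hf
  have h1 : ∑ j, f j ≤ ∑ _j : Fin k, (-1 : ℤ) :=
    Finset.sum_le_sum fun j _ => (hb j).2
  simp only [Finset.sum_const, Finset.card_univ, Fintype.card_fin, nsmul_eq_mul,
    mul_neg_one] at h1
  omega

/-- Leibniz rule for the commutator of `A` with a product of operators, each of whose
commutators with `A` is a scalar. -/
lemma leibniz (A : Module.End ℂ M) (k : ℕ) :
    ∀ (B : Fin (k + 1) → Module.End ℂ M) (c : Fin (k + 1) → ℂ),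
      (∀ j, A * B j - B j * A = c j • 1) →
      A * (List.ofFn B).prod - (List.ofFn B).prod * A
        = ∑ j, c j • (List.ofFn fun i => B (j.succAbove i)).prod := by
  induction k with
  | zero =>
    intro B c hc
    simpa using hc 0
  | succ k ih =>
    intro B c hc
    have hP := ih (fun i => B i.succ) (fun i => c i.succ) fun j => hc j.succ
    have expand : A * (List.ofFn B).prod - (List.ofFn B).prod * A
        = (A * B 0 - B 0 * A) * (List.ofFn fun i : Fin (k + 1) => B i.succ).prod
          + B 0 * (A * (List.ofFn fun i : Fin (k + 1) => B i.succ).prod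
              - (List.ofFn fun i : Fin (k + 1) => B i.succ).prod * A) := by
      rw [List.ofFn_succ, List.prod_cons]
      noncomm_ring
    have hmul : ∀ j : Fin (k + 1),
        c j.succ • (List.ofFn fun i : Fin (k + 1) => B (j.succ.succAbove i)).prod
          = B 0 * (c j.succ • (List.ofFn fun i : Fin k => B ((j.succAbove i).succ)).prod) := by
      intro j
      rw [List.ofFn_succ, List.prod_cons, Fin.succ_succAbove_zero, mul_smul_comm]
      simp only [Fin.succ_succAbove_succ]
    have hRHS : (∑ j : Fin (k + 1 + 1), c j • (List.ofFn fun i => B (j.succAbove i)).prod)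
        = c 0 • (List.ofFn fun i : Fin (k + 1) => B i.succ).prod
          + B 0 * ∑ j : Fin (k + 1),
              c j.succ • (List.ofFn fun i : Fin k => B ((j.succAbove i).succ)).prod := by
      rw [Fin.sum_univ_succ, Finset.mul_sum,
        Finset.sum_congr rfl fun j _ => hmul j]
      simp [Fin.succAbove_zero]
    rw [expand, hc 0, hP, hRHS, smul_mul_assoc, one_mul]

/-- Reindexing: summing over `(k+1)`-tuples with a fixed coordinate equal to `-m`
is the same as summing over the `k`-tuples obtained by removing that coordinate. -/
lemma sum_remove {E : Type*} [AddCommMonoid E] (k : ℕ) (s m : ℤ) (hm : 1 ≤ m)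
    (j : Fin (k + 1)) (F : (Fin k → ℤ) → E) :
    ∑ f ∈ negTuples (k + 1) s, (if f j = -m then F (Fin.removeNth j f) else 0)
      = ∑ g ∈ negTuples k (s + m), F g := by
  rw [← Finset.sum_filter]
  refine Finset.sum_nbij' (fun f => Fin.removeNth j f)
    (fun g => Fin.insertNth j (-m) g) ?_ ?_ ?_ ?_ ?_
  · -- forward membership
    intro f hf
    rw [Finset.mem_filter] at hf
    obtain ⟨hf, hfj⟩ := hf
    rw [mem_negTuples] at hf ⊢
    simp only [Fin.removeNth]
    obtain ⟨hb, hsum⟩ := hf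
    have hsum' : ∑ i, f (j.succAbove i) = s + m := by
      have := Fin.sum_univ_succAbove f j
      rw [hfj] at this
      omega
    refine ⟨fun i => ?_, hsum'⟩
    constructor
    · -- s + m ≤ f (j.succAbove i)
      have h1 : f (j.succAbove i) + ∑ i' ∈ Finset.univ.erase i, f (j.succAbove i')
          = ∑ i', f (j.succAbove i') :=
        Finset.add_sum_erase Finset.univ (fun i' => f (j.succAbove i')) (Finset.mem_univ i)
      have h2 : ∑ i' ∈ Finset.univ.erase i, f (j.succAbove i') ≤ 0 :=
        Finset.sum_nonpos fun i' _ => le_trans (hb _).2 (by norm_num)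
      have h3 := (hb (j.succAbove i)).2
      omega
    · exact (hb _).2
  · -- backward membership
    intro g hg
    rw [mem_negTuples] at hg
    obtain ⟨hb, hsum⟩ := hg
    have hkm : s + m ≤ -(k : ℤ) := by
      have h1 : ∑ i, g i ≤ ∑ _i : Fin k, (-1 : ℤ) :=
        Finset.sum_le_sum fun i _ => (hb i).2
      simp only [Finset.sum_const, Finset.card_univ, Fintype.card_fin, nsmul_eq_mul,
        mul_neg_one] at h1
      omega
    rw [Finset.mem_filter, mem_negTuples]
    beta_reduce
    have happ : ∀ i : Fin k,
        Fin.insertNth (α := fun _ => ℤ) j (-m) g (j.succAbove i) = g i := fun i =>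
      Fin.insertNth_apply_succAbove (α := fun _ => ℤ) j (-m) g i
    have hsum2 : ∑ i, Fin.insertNth (α := fun _ => ℤ) j (-m) g i = s := by
      rw [Fin.sum_univ_succAbove _ j, Fin.insertNth_apply_same,
        Finset.sum_congr rfl fun i _ => happ i]
      have hsum' : Finset.univ.sum g = s + m := hsum
      omega
    refine ⟨⟨fun i => ?_, hsum2⟩,
      Fin.insertNth_apply_same (α := fun _ => ℤ) j (-m) g⟩
    rcases eq_or_ne i j with rfl | hne
    · rw [Fin.insertNth_apply_same]
      constructor <;> omega
    · obtain ⟨i', rfl⟩ := Fin.exists_succAbove_eq hne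
      rw [happ i']
      have := hb i'
      constructor <;> omega
  · -- left inverse
    intro f hf
    rw [Finset.mem_filter] at hf
    rw [← hf.2]
    show Fin.insertNth j (f j) (Fin.removeNth j f) = f
    exact Fin.insertNth_self_removeNth (α := fun _ => ℤ) j f
  · -- right inverse
    intro g _
    show Fin.removeNth (α := fun _ => ℤ) j (Fin.insertNth j (-m) g) = g
    exact Fin.removeNth_insertNth (α := fun _ => ℤ) j (-m) g
  · intro f _
    rfl

/-- The inner sum appearing in `Ecoef`, for a fixed number `k` of factors. -/
noncomputable def Ssum (act : H → ℤ → Module.End ℂ M) (h : H) (k : ℕ) (s : ℤ) :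
    Module.End ℂ M :=
  ∑ f ∈ negTuples k s, (∏ j, (-(f j : ℂ))⁻¹) • (List.ofFn fun j => act h (f j)).prod

lemma Ecoef_eq (act : H → ℤ → Module.End ℂ M) (h : H) {r : ℤ} (hr : r ≤ 0) :
    Ecoef act h r
      = ∑ k ∈ Finset.range ((-r).toNat + 1), (k.factorial : ℂ)⁻¹ • Ssum act h k r := by
  rw [Ecoef, if_neg (by omega)]
  rfl

lemma Ssum_zero_eq (act : H → ℤ → Module.End ℂ M) (h : H) (s : ℤ) :
    Ssum act h 0 s = (negTuples 0 s).card • (1 : Module.End ℂ M) := by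
  simp [Ssum, Finset.sum_const, List.ofFn_zero]

lemma Ssum_comm (κ : H →ₗ[ℂ] H →ₗ[ℂ] ℂ) (act : H → ℤ → Module.End ℂ M)
    (heis : ∀ x y : H, ∀ m n : ℤ,
      act x m * act y n - act y n * act x m
        = if m + n = 0 then ((m : ℂ) * κ x y) • (1 : Module.End ℂ M) else 0)
    (x h : H) {m : ℤ} (hm : 1 ≤ m) (k : ℕ) (s : ℤ) :
    act x m * Ssum act h (k + 1) s - Ssum act h (k + 1) s * act x m
      = (((k : ℂ) + 1) * κ x h) • Ssum act h k (s + m) := by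
  have hm0 : (m : ℂ) ≠ 0 := Int.cast_ne_zero.mpr (by omega)
  rw [Ssum, Finset.mul_sum, Finset.sum_mul, ← Finset.sum_sub_distrib]
  have step : ∀ f ∈ negTuples (k + 1) s,
      act x m * ((∏ j, (-(f j : ℂ))⁻¹) • (List.ofFn fun j => act h (f j)).prod)
        - ((∏ j, (-(f j : ℂ))⁻¹) • (List.ofFn fun j => act h (f j)).prod) * act x m
      = ∑ j : Fin (k + 1), (if f j = -m then
          κ x h • ((∏ i, (-(f (j.succAbove i) : ℂ))⁻¹) •
            (List.ofFn fun i => act h (f (j.succAbove i))).prod) else 0) := by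
    intro f _
    rw [mul_smul_comm, smul_mul_assoc, ← smul_sub,
      leibniz (act x m) k (fun j => act h (f j))
        (fun j => if m + f j = 0 then (m : ℂ) * κ x h else 0)
        (fun j => by
          rw [heis x h m (f j)]
          by_cases hq : m + f j = 0 <;> simp [hq]),
      Finset.smul_sum]
    refine Finset.sum_congr rfl fun j _ => ?_
    beta_reduce
    by_cases hj : f j = -m
    · rw [if_pos (by omega), if_pos hj, smul_smul, smul_smul]
      congr 1
      have hw : (∏ i, (-(f i : ℂ))⁻¹)
          = (m : ℂ)⁻¹ * ∏ i, (-(f (j.succAbove i) : ℂ))⁻¹ := by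
        rw [Fin.prod_univ_succAbove (fun i => (-(f i : ℂ))⁻¹) j, hj]
        congr 1
        push_cast
        ring
      rw [hw]
      have hself : (m : ℂ)⁻¹ * (m : ℂ) = 1 := inv_mul_cancel₀ hm0
      calc (m : ℂ)⁻¹ * (∏ i, (-(f (j.succAbove i) : ℂ))⁻¹) * ((m : ℂ) * κ x h)
          = ((m : ℂ)⁻¹ * (m : ℂ)) * (κ x h * ∏ i, (-(f (j.succAbove i) : ℂ))⁻¹) := by
            ring
        _ = κ x h * ∏ i, (-(f (j.succAbove i) : ℂ))⁻¹ := by rw [hself, one_mul]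
    · rw [if_neg (by omega), if_neg hj]
      simp
  rw [Finset.sum_congr rfl step, Finset.sum_comm]
  have hjsum : ∀ j : Fin (k + 1),
      (∑ f ∈ negTuples (k + 1) s, if f j = -m then
          κ x h • ((∏ i, (-(f (j.succAbove i) : ℂ))⁻¹) •
            (List.ofFn fun i => act h (f (j.succAbove i))).prod) else 0)
      = κ x h • Ssum act h k (s + m) := by
    intro j
    have hsr := sum_remove k s m hm j (fun g =>
      κ x h • ((∏ i, (-(g i : ℂ))⁻¹) • (List.ofFn fun i => act h (g i)).prod))
    simp only [Fin.removeNth] at hsr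
    rw [hsr, ← Finset.smul_sum]
    rfl
  rw [Finset.sum_congr rfl fun j _ => hjsum j, Finset.sum_const, Finset.card_univ,
    Fintype.card_fin, mul_smul, ← Nat.cast_smul_eq_nsmul ℂ]
  push_cast
  ring_nf

theorem stmt_7 (κ : H →ₗ[ℂ] H →ₗ[ℂ] ℂ) (hκ : ∀ x y : H, κ x y = κ y x)
    (act : H → ℤ → Module.End ℂ M)
    (heis : ∀ x y : H, ∀ m n : ℤ,
      act x m * act y n - act y n * act x m
        = if m + n = 0 then ((m : ℂ) * κ x y) • (1 : Module.End ℂ M) else 0)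
    (x h : H) (m r : ℤ) (hr : r ≤ 0) :
    (m ≤ 0 → act x m * Ecoef act h r = Ecoef act h r * act x m) ∧
    (1 ≤ m → act x m * Ecoef act h r - Ecoef act h r * act x m
      = κ x h • Ecoef act h (r + m)) := by
  constructor
  · -- the case m ≤ 0
    intro hm
    have : Commute (act x m) (Ecoef act h r) := by
      rw [Ecoef, if_neg (by omega)]
      refine Commute.sum_right _ _ _ fun k _ => ?_
      refine Commute.smul_right ?_ _
      refine Commute.sum_right _ _ _ fun f hf => ?_
      refine Commute.smul_right ?_ _
      refine Commute.list_prod_right _ _ fun b hb => ?_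
      rw [List.mem_ofFn] at hb
      obtain ⟨j, rfl⟩ := hb
      have hfj : f j ≤ -1 := ((mem_negTuples.mp hf).1 j).2
      have hcomm := heis x h m (f j)
      rw [if_neg (by omega)] at hcomm
      exact sub_eq_zero.mp hcomm
    exact this
  · -- the case 1 ≤ m
    intro hm
    rw [Ecoef_eq act h hr, Finset.sum_mul, Finset.mul_sum, ← Finset.sum_sub_distrib]
    have term_eq : ∀ k,
        act x m * ((k.factorial : ℂ)⁻¹ • Ssum act h k r)
          - ((k.factorial : ℂ)⁻¹ • Ssum act h k r) * act x m
        = (k.factorial : ℂ)⁻¹ • (act x m * Ssum act h k r - Ssum act h k r * act x m) := by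
      intro k
      rw [mul_smul_comm, smul_mul_assoc, smul_sub]
    rw [Finset.sum_congr rfl fun k _ => term_eq k, Finset.sum_range_succ']
    have zero_term : (Nat.factorial 0 : ℂ)⁻¹ •
        (act x m * Ssum act h 0 r - Ssum act h 0 r * act x m) = 0 := by
      rw [Ssum_zero_eq]
      have hcomm : Commute (act x m) ((negTuples 0 r).card • (1 : Module.End ℂ M)) :=
        Commute.smul_right (Commute.one_right _) _
      rw [hcomm.eq, sub_self, smul_zero]
    rw [zero_term, add_zero]
    have step : ∀ k : ℕ,
        ((k + 1).factorial : ℂ)⁻¹ •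
            (act x m * Ssum act h (k + 1) r - Ssum act h (k + 1) r * act x m)
          = κ x h • ((k.factorial : ℂ)⁻¹ • Ssum act h k (r + m)) := by
      intro k
      rw [Ssum_comm κ act heis x h hm k r, smul_smul, smul_smul]
      congr 1
      have hfac : ((k + 1).factorial : ℂ) = ((k : ℂ) + 1) * (k.factorial : ℂ) := by
        rw [Nat.factorial_succ]
        push_cast
        ring
      have hk1 : ((k : ℂ) + 1) ≠ 0 := Nat.cast_add_one_ne_zero k
      have hfk : (k.factorial : ℂ) ≠ 0 := Nat.cast_ne_zero.mpr k.factorial_ne_zero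
      rw [hfac]
      field_simp
    rw [Finset.sum_congr rfl fun k _ => step k, ← Finset.smul_sum]
    congr 1
    -- now compare the sum with Ecoef act h (r + m)
    by_cases hrm : 1 ≤ r + m
    · rw [Ecoef, if_pos hrm]
      refine Finset.sum_eq_zero fun k _ => ?_
      have : negTuples k (r + m) = ∅ := negTuples_eq_empty (by omega)
      rw [Ssum, this, Finset.sum_empty, smul_zero]
    · push_neg at hrm
      rw [Ecoef_eq act h (by omega)]
      refine (Finset.sum_subset ?_ ?_).symm
      · refine Finset.range_subset_range.mpr ?_
        omega
      · intro k _ hk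
        rw [Finset.mem_range, not_lt] at hk
        have : negTuples k (r + m) = ∅ := negTuples_eq_empty (by omega)
        rw [Ssum, this, Finset.sum_empty, smul_zero]
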